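/- Let f̂ : S×C → ℝ be a fixed measurable model. Assume Y, f(X), f̂(X), f(X̃_S,X_C) and f̂(X̃_S,X_C) are square-integrable, f∘X is a version of the conditional expectation E[Y | σ(X_S, X_C)], (X̃_S, X_C) has the same joint law as (X_S, X_C), and Y and X̃_S are conditionally independent given σ(X_C). Then the difference between the conditional DGP-PFI and the conditional model-PFI equals twice the expected conditional excess variance: PFI_f − PFI_{f̂} = 2 E[ (E[f(X)² | σ(X_C)] − (E[f(X) | σ(X_C)])²) − (E[f(X)·f̂(X) | σ(X_C)] − E[f(X) | σ(X_C)]·E[f̂(X) | σ(X_C)]) ], i.e., PFI_f − PFI_{f̂} = 2 E_{X_C}[Var_{X_S|X_C}[f] − Cov_{X_S|X_C}[f, f̂]]. -/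

import Mathlib

open MeasureTheory ProbabilityTheory Filter

section Aux

variable {Ω : Type*} {m' : MeasurableSpace Ω} {m0 : MeasurableSpace Ω} {P : Measure Ω}
  [IsProbabilityMeasure P]

/-- Product of two `L²` functions is integrable. -/
lemma aux_integrable_mul {a b : Ω → ℝ} (ha : MemLp a 2 P) (hb : MemLp b 2 P) :
    Integrable (fun ω => a ω * b ω) P := by
  have h : MemLp (a • b) 1 P := hb.smul ha
  exact memLp_one_iff_integrable.mp h

/-- The conditional expectation of an `L²` function is in `L²`. -/
lemma aux_memℒp_condexp (hm : m' ≤ m0) {h : Ω → ℝ}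
    (hh : MemLp h 2 P) : MemLp (P[h|m']) 2 P := by
  have hint : Integrable h P := hh.integrable one_le_two
  have hae : (condExpL2 ℝ ℝ hm (hh.toLp h) : Ω → ℝ) =ᵐ[P] P[h|m'] := by
    refine ae_eq_condExp_of_forall_setIntegral_eq hm hint
      (fun s hs hμs => integrableOn_condExpL2_of_measure_ne_top hm hμs.ne _)
      (fun s hs hμs => ?_) (aestronglyMeasurable_condExpL2 hm _)
    rw [integral_condExpL2_eq hm (hh.toLp h) hs hμs.ne]
    exact setIntegral_congr_ae (hm s hs) ((MemLp.coeFn_toLp hh).mono fun x hx _ => hx)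
  exact (Lp.memLp ((condExpL2 ℝ ℝ hm (hh.toLp h)) : Lp ℝ 2 P)).ae_eq hae

/-- Projection property: integrating against a bounded `m'`-measurable weight. -/
lemma aux_integral_mul_condexp (hm : m' ≤ m0)
    {a Z : Ω → ℝ} (ha : StronglyMeasurable[m'] a) {c : ℝ}
    (hc : ∀ᵐ ω ∂P, ‖a ω‖ ≤ c) (hZ : Integrable Z P) :
    ∫ ω, Z ω * a ω ∂P = ∫ ω, (P[Z|m']) ω * a ω ∂P := by
  have h1 : P[a * Z|m'] =ᵐ[P] a * P[Z|m'] :=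
    condExp_stronglyMeasurable_mul_of_bound hm ha hZ c hc
  calc ∫ ω, Z ω * a ω ∂P = ∫ ω, (a * Z) ω ∂P := by
        simp_rw [Pi.mul_apply, mul_comm]
    _ = ∫ ω, (P[a * Z|m']) ω ∂P := (integral_condExp hm).symm
    _ = ∫ ω, (a * P[Z|m']) ω ∂P := integral_congr_ae h1
    _ = ∫ ω, (P[Z|m']) ω * a ω ∂P := by simp_rw [Pi.mul_apply, mul_comm]

/-- Conditional expectation of an indicator is bounded by 1. -/
lemma aux_condexp_indicator_bound (hm : m' ≤ m0) {T : Set Ω}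
    (hT : MeasurableSet T) :
    ∀ᵐ ω ∂P, ‖(P[T.indicator (fun _ => (1:ℝ))|m']) ω‖ ≤ 1 := by
  have hTi : Integrable (T.indicator (fun _ => (1:ℝ))) P := (integrable_const 1).indicator hT
  have h0 : 0 ≤ᵐ[P] P[T.indicator (fun _ => (1:ℝ))|m'] :=
    condExp_nonneg (Eventually.of_forall fun ω =>
      Set.indicator_nonneg (fun _ _ => zero_le_one) ω)
  have h1 : P[T.indicator (fun _ => (1:ℝ))|m'] ≤ᵐ[P] P[(fun _ => (1:ℝ))|m'] :=
    condExp_mono hTi (integrable_const 1)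
      (Eventually.of_forall fun ω => by
        by_cases hω : ω ∈ T <;>
          simp [Set.indicator_of_mem, Set.indicator_of_notMem, hω])
  rw [condExp_const hm] at h1
  filter_upwards [h0, h1] with ω h0ω h1ω
  simp only [Pi.zero_apply] at h0ω
  rw [Real.norm_eq_abs, abs_le]
  exact ⟨by linarith, h1ω⟩

end Aux

section AuxSup

variable {Ω : Type*} {m' mT m₁ : MeasurableSpace Ω} {m0 : MeasurableSpace Ω} {P : Measure Ω}
  [IsProbabilityMeasure P]

/-- Key: conditional independence implies the conditional expectation given the
larger σ-algebra coincides with the one given the conditioning σ-algebra. -/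
lemma aux_condexp_sup [StandardBorelSpace Ω] {S' : Type*} [MeasurableSpace S']
    (hm' : m' ≤ m0) (XtS : Ω → S') (hXtS : Measurable XtS)
    (Y : Ω → ℝ) (hYmeas : Measurable Y) (hYi : Integrable Y P)
    (hCI : CondIndepFun m' hm' Y XtS P) :
    P[Y | MeasurableSpace.comap XtS inferInstance ⊔ m'] =ᵐ[P] P[Y|m'] := by
  have hmT_le : MeasurableSpace.comap XtS inferInstance ≤ m0 := hXtS.comap_le
  have hm'' : MeasurableSpace.comap XtS inferInstance ⊔ m' ≤ m0 := sup_le hmT_le hm'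
  have hm₁ : MeasurableSpace.comap Y inferInstance ≤ m0 := hYmeas.comap_le
  have hY₁ : Measurable[MeasurableSpace.comap Y inferInstance] Y :=
    Measurable.of_comap_le le_rfl
  -- the key numeric identity on π-system elements
  have key : ∀ t : Set S', MeasurableSet t → ∀ B : Set Ω, MeasurableSet[m'] B →
      ∫ ω in XtS ⁻¹' t ∩ B, Y ω ∂P = ∫ ω in XtS ⁻¹' t ∩ B, (P[Y|m']) ω ∂P := by
    intro t ht B hB
    have hTmeas : MeasurableSet (XtS ⁻¹' t) := hXtS ht
    have hB0 : MeasurableSet B := hm' _ hB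
    set T : Set Ω := XtS ⁻¹' t with hTdef
    set w₁ : Ω → ℝ := fun ω => T.indicator (fun _ => (1:ℝ)) ω * B.indicator (fun _ => (1:ℝ)) ω
      with hw₁def
    set w₂ : Ω → ℝ :=
      fun ω => (P[T.indicator (fun _ => (1:ℝ))|m']) ω * B.indicator (fun _ => (1:ℝ)) ω
      with hw₂def
    -- basic facts about the weights
    have hw₁_bd : ∀ ω, ‖w₁ ω‖ ≤ 1 := by
      intro ω
      rw [hw₁def]
      by_cases h1 : ω ∈ T <;> by_cases h2 : ω ∈ B <;>
        simp [Set.indicator_of_mem, Set.indicator_of_notMem, h1, h2]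
    have hw₂_bd : ∀ᵐ ω ∂P, ‖w₂ ω‖ ≤ 1 := by
      filter_upwards [aux_condexp_indicator_bound hm' hTmeas] with ω hω
      rw [hw₂def, norm_mul]
      have hb1 : ‖B.indicator (fun _ => (1:ℝ)) ω‖ ≤ 1 := by
        by_cases h2 : ω ∈ B <;>
          simp [Set.indicator_of_mem, Set.indicator_of_notMem, h2]
      calc ‖(P[T.indicator (fun _ => (1:ℝ))|m']) ω‖ * ‖B.indicator (fun _ => (1:ℝ)) ω‖
          ≤ 1 * 1 := mul_le_mul hω hb1 (norm_nonneg _) zero_le_one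
        _ = 1 := by ring
    have hw₁_sm : StronglyMeasurable w₁ :=
      ((stronglyMeasurable_const.indicator hTmeas).mul
        (stronglyMeasurable_const.indicator hB0))
    have hw₂_sm' : StronglyMeasurable[m'] w₂ :=
      (stronglyMeasurable_condExp.mul (stronglyMeasurable_const.indicator hB))
    have hw₁_int : Integrable w₁ P :=
      (((integrable_const (1:ℝ)).indicator hB0).bdd_mul (c := 1)
        ((stronglyMeasurable_const.indicator hTmeas)).aestronglyMeasurable
        (Eventually.of_forall fun ω => by
          by_cases h1 : ω ∈ T <;>
            simp [Set.indicator_of_mem, Set.indicator_of_notMem, h1]))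
    have hw₂_int : Integrable w₂ P := by
      have h : Integrable (fun ω => B.indicator (fun _ => (1:ℝ)) ω
          * (P[T.indicator (fun _ => (1:ℝ))|m']) ω) P :=
        (integrable_condExp (f := T.indicator (fun _ => (1:ℝ))) (m := m')
          (μ := P)).bdd_mul (c := 1)
          ((stronglyMeasurable_const.indicator hB0)).aestronglyMeasurable
          (Eventually.of_forall fun ω => by
            by_cases h2 : ω ∈ B <;>
              simp [Set.indicator_of_mem, Set.indicator_of_notMem, h2])
      exact h.congr (Eventually.of_forall fun ω => mul_comm _ _)
    -- set integral as weighted integral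
    have set_int : ∀ Z : Ω → ℝ, ∫ ω in T ∩ B, Z ω ∂P = ∫ ω, Z ω * w₁ ω ∂P := by
      intro Z
      rw [← integral_indicator (hTmeas.inter hB0)]
      congr 1
      funext ω
      by_cases h1 : ω ∈ T <;> by_cases h2 : ω ∈ B <;>
        simp [Set.indicator_of_mem, Set.indicator_of_notMem, h1, h2, Set.mem_inter_iff, hw₁def]
    -- identity for simple functions measurable w.r.t. σ(Y)
    have hCI' := (condIndepFun_iff_condExp_inter_preimage_eq_mul
      (hm' := hm') (μ := P) hYmeas hXtS).mp hCI
    have good : ∀ ψ : @SimpleFunc Ω (MeasurableSpace.comap Y inferInstance) ℝ,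
        ∫ ω, ψ ω * w₁ ω ∂P = ∫ ω, ψ ω * w₂ ω ∂P := by
      intro ψ
      refine @SimpleFunc.induction Ω ℝ (MeasurableSpace.comap Y inferInstance) _
        (fun ψ => ∫ ω, ψ ω * w₁ ω ∂P = ∫ ω, ψ ω * w₂ ω ∂P) ?_ ?_ ψ
      · intro c s hs
        classical
        have hco : ∀ ω, (@SimpleFunc.piecewise Ω ℝ (MeasurableSpace.comap Y inferInstance) s hs
            (@SimpleFunc.const Ω ℝ (MeasurableSpace.comap Y inferInstance) c)
            (@SimpleFunc.const Ω ℝ (MeasurableSpace.comap Y inferInstance) (0:ℝ))) ω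
            = c * s.indicator (fun _ => (1:ℝ)) ω := by
          intro ω
          by_cases hω : ω ∈ s <;>
            simp [SimpleFunc.piecewise_apply, SimpleFunc.coe_const,
              Set.indicator_of_mem, Set.indicator_of_notMem, hω]
        simp_rw [hco, mul_assoc]
        rw [integral_const_mul c, integral_const_mul c]
        congr 1
        obtain ⟨u, hu, rfl⟩ := hs
        have hs0 : MeasurableSet (Y ⁻¹' u) := hYmeas hu
        have step1 : ∫ ω, (Y ⁻¹' u).indicator (fun _ => (1:ℝ)) ω * w₁ ω ∂P
            = ∫ ω, (Y ⁻¹' u ∩ T).indicator (fun _ => (1:ℝ)) ω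
                * B.indicator (fun _ => (1:ℝ)) ω ∂P := by
          congr 1
          funext ω
          by_cases h1 : ω ∈ Y ⁻¹' u <;> by_cases h2 : ω ∈ T <;>
            simp [Set.indicator_of_mem, Set.indicator_of_notMem, h1, h2,
              Set.mem_inter_iff, hw₁def, mul_assoc]
        have step2 : ∫ ω, (Y ⁻¹' u ∩ T).indicator (fun _ => (1:ℝ)) ω
              * B.indicator (fun _ => (1:ℝ)) ω ∂P
            = ∫ ω, (P[(Y ⁻¹' u ∩ T).indicator (fun _ => (1:ℝ))|m']) ω
                * B.indicator (fun _ => (1:ℝ)) ω ∂P := by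
          refine aux_integral_mul_condexp hm'
            (stronglyMeasurable_const.indicator hB) (c := 1)
            (Eventually.of_forall fun ω => by
              by_cases h2 : ω ∈ B <;>
                simp [Set.indicator_of_mem, Set.indicator_of_notMem, h2])
            ((integrable_const 1).indicator (hs0.inter hTmeas))
        have step3 : ∫ ω, (P[(Y ⁻¹' u ∩ T).indicator (fun _ => (1:ℝ))|m']) ω
              * B.indicator (fun _ => (1:ℝ)) ω ∂P
            = ∫ ω, (P[(Y ⁻¹' u).indicator (fun _ => (1:ℝ))|m']) ω
                * ((P[T.indicator (fun _ => (1:ℝ))|m']) ω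
                  * B.indicator (fun _ => (1:ℝ)) ω) ∂P := by
          have h := hCI' u t hu ht
          refine integral_congr_ae ?_
          filter_upwards [h] with ω hω
          rw [← mul_assoc, ← hω]
        have step4 : ∫ ω, (P[(Y ⁻¹' u).indicator (fun _ => (1:ℝ))|m']) ω
              * ((P[T.indicator (fun _ => (1:ℝ))|m']) ω
                * B.indicator (fun _ => (1:ℝ)) ω) ∂P
            = ∫ ω, (Y ⁻¹' u).indicator (fun _ => (1:ℝ)) ω * w₂ ω ∂P := by
          have h := aux_integral_mul_condexp hm' hw₂_sm' hw₂_bd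
            ((integrable_const 1).indicator hs0)
          rw [← h]
        rw [step1, step2, step3, step4]
      · intro ψ₁ ψ₂ _ h1 h2
        have hint : ∀ (φ : @SimpleFunc Ω (MeasurableSpace.comap Y inferInstance) ℝ)
            (w : Ω → ℝ), Integrable w P → Integrable (fun ω => φ ω * w ω) P := by
          intro φ w hw
          obtain ⟨Cφ, hCφ⟩ := @SimpleFunc.exists_forall_norm_le Ω ℝ
            (MeasurableSpace.comap Y inferInstance) _ φ
          exact hw.bdd_mul
            (((@SimpleFunc.stronglyMeasurable Ω ℝ
              (MeasurableSpace.comap Y inferInstance) _ φ).mono hm₁)).aestronglyMeasurable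
            (Eventually.of_forall hCφ)
        have e1 : ∀ w : Ω → ℝ, Integrable w P →
            ∫ ω, (ψ₁ + ψ₂) ω * w ω ∂P
              = ∫ ω, ψ₁ ω * w ω ∂P + ∫ ω, ψ₂ ω * w ω ∂P := by
          intro w hw
          have hco : (fun ω => (ψ₁ + ψ₂) ω * w ω)
              = fun ω => ψ₁ ω * w ω + ψ₂ ω * w ω := by
            funext ω; simp [SimpleFunc.coe_add, Pi.add_apply, add_mul]
          rw [hco, integral_add (hint ψ₁ w hw) (hint ψ₂ w hw)]
        rw [e1 w₁ hw₁_int, e1 w₂ hw₂_int, h1, h2]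
    -- pass to the limit
    have main : ∫ ω, Y ω * w₁ ω ∂P = ∫ ω, Y ω * w₂ ω ∂P := by
      set ψ : ℕ → @SimpleFunc Ω (MeasurableSpace.comap Y inferInstance) ℝ := fun n =>
        @SimpleFunc.approxOn ℝ Ω _ _ _ (MeasurableSpace.comap Y inferInstance)
          Y hY₁ Set.univ 0 (Set.mem_univ 0) _ n with hψdef
      have hψ_tendsto : ∀ ω, Tendsto (fun n => ψ n ω) atTop (nhds (Y ω)) := fun ω =>
        @SimpleFunc.tendsto_approxOn ℝ Ω _ _ _ (MeasurableSpace.comap Y inferInstance)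
          Y hY₁ Set.univ 0 (Set.mem_univ 0) _ ω (by simp)
      have hψ_bd : ∀ n ω, ‖ψ n ω‖ ≤ ‖Y ω‖ + ‖Y ω‖ := fun n ω =>
        @SimpleFunc.norm_approxOn_zero_le Ω ℝ (MeasurableSpace.comap Y inferInstance) _ _ _
          Y hY₁ Set.univ (Set.mem_univ 0) _ ω n
      have hbound : Integrable (fun ω => ‖Y ω‖ + ‖Y ω‖) P := hYi.norm.add hYi.norm
      have htd : ∀ (w : Ω → ℝ), AEStronglyMeasurable w P → (∀ᵐ ω ∂P, ‖w ω‖ ≤ 1) →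
          Tendsto (fun n => ∫ ω, ψ n ω * w ω ∂P) atTop (nhds (∫ ω, Y ω * w ω ∂P)) := by
        intro w hwm hwb
        refine tendsto_integral_of_dominated_convergence (fun ω => ‖Y ω‖ + ‖Y ω‖)
          (fun n => (((@SimpleFunc.stronglyMeasurable Ω ℝ
            (MeasurableSpace.comap Y inferInstance) _ (ψ n)).mono
              hm₁)).aestronglyMeasurable.mul hwm)
          hbound ?_ ?_
        · intro n
          filter_upwards [hwb] with ω hω
          calc ‖ψ n ω * w ω‖ = ‖ψ n ω‖ * ‖w ω‖ := norm_mul _ _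
            _ ≤ (‖Y ω‖ + ‖Y ω‖) * 1 :=
              mul_le_mul (hψ_bd n ω) hω (norm_nonneg _) (by positivity)
            _ = ‖Y ω‖ + ‖Y ω‖ := by ring
        · exact Eventually.of_forall fun ω => (hψ_tendsto ω).mul_const _
      have t1 := htd w₁ hw₁_sm.aestronglyMeasurable (Eventually.of_forall hw₁_bd)
      have t2 := htd w₂ ((hw₂_sm'.mono hm')).aestronglyMeasurable hw₂_bd
      have hseq : (fun n => ∫ ω, ψ n ω * w₁ ω ∂P) = fun n => ∫ ω, ψ n ω * w₂ ω ∂P := by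
        funext n; exact good (ψ n)
      rw [hseq] at t1
      exact tendsto_nhds_unique t1 t2
    -- assemble the key identity
    have last1 : ∫ ω, Y ω * w₂ ω ∂P = ∫ ω, (P[Y|m']) ω * w₂ ω ∂P :=
      aux_integral_mul_condexp hm' hw₂_sm' hw₂_bd hYi
    have last2 : ∫ ω, (P[Y|m']) ω * w₂ ω ∂P = ∫ ω, (P[Y|m']) ω * w₁ ω ∂P := by
      set a' : Ω → ℝ := fun ω => (P[Y|m']) ω * B.indicator (fun _ => (1:ℝ)) ω with ha'def
      have ha'_sm : StronglyMeasurable[m'] a' :=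
        stronglyMeasurable_condExp.mul (stronglyMeasurable_const.indicator hB)
      have ha'_int0 : Integrable (fun ω => B.indicator (fun _ => (1:ℝ)) ω
          * (P[Y|m']) ω) P :=
        ((integrable_condExp).bdd_mul (c := 1)
          ((stronglyMeasurable_const.indicator hB0)).aestronglyMeasurable
          (Eventually.of_forall fun ω => by
            by_cases h2 : ω ∈ B <;>
              simp [Set.indicator_of_mem, Set.indicator_of_notMem, h2]))
      have ha'_int : Integrable a' P :=
        ha'_int0.congr (Eventually.of_forall fun ω => mul_comm _ _)
      have hTa_int0 : Integrable (fun ω => T.indicator (fun _ => (1:ℝ)) ω * a' ω) P :=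
        (ha'_int.bdd_mul (c := 1)
          ((stronglyMeasurable_const.indicator hTmeas)).aestronglyMeasurable
          (Eventually.of_forall fun ω => by
            by_cases h1 : ω ∈ T <;>
              simp [Set.indicator_of_mem, Set.indicator_of_notMem, h1]))
      have hTa_int : Integrable (a' * T.indicator (fun _ => (1:ℝ))) P :=
        hTa_int0.congr (Eventually.of_forall fun ω => mul_comm _ _)
      have hpull : P[a' * T.indicator (fun _ => (1:ℝ))|m']
          =ᵐ[P] a' * P[T.indicator (fun _ => (1:ℝ))|m'] :=
        condExp_mul_of_stronglyMeasurable_left ha'_sm hTa_int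
          ((integrable_const 1).indicator hTmeas)
      have e : ∫ ω, (a' * T.indicator (fun _ => (1:ℝ))) ω ∂P
          = ∫ ω, (a' * P[T.indicator (fun _ => (1:ℝ))|m']) ω ∂P :=
        ((integral_condExp hm').symm).trans (integral_congr_ae hpull)
      calc ∫ ω, (P[Y|m']) ω * w₂ ω ∂P
          = ∫ ω, (a' * P[T.indicator (fun _ => (1:ℝ))|m']) ω ∂P := by
            congr 1; funext ω; simp only [Pi.mul_apply, ha'def, hw₂def]; ring
        _ = ∫ ω, (a' * T.indicator (fun _ => (1:ℝ))) ω ∂P := e.symm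
        _ = ∫ ω, (P[Y|m']) ω * w₁ ω ∂P := by
            congr 1; funext ω; simp only [Pi.mul_apply, ha'def, hw₁def]; ring
    calc ∫ ω in T ∩ B, Y ω ∂P = ∫ ω, Y ω * w₁ ω ∂P := set_int Y
      _ = ∫ ω, Y ω * w₂ ω ∂P := main
      _ = ∫ ω, (P[Y|m']) ω * w₂ ω ∂P := last1
      _ = ∫ ω, (P[Y|m']) ω * w₁ ω ∂P := last2
      _ = ∫ ω in T ∩ B, (P[Y|m']) ω ∂P := (set_int (P[Y|m'])).symm
  -- π-system argument: extend `key` to all sets in the sup σ-algebra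
  have hπ_pi : IsPiSystem
      {s : Set Ω | ∃ t B, MeasurableSet t ∧ MeasurableSet[m'] B ∧ s = XtS ⁻¹' t ∩ B} := by
    rintro s₁ ⟨t₁, B₁, ht₁, hB₁, rfl⟩ s₂ ⟨t₂, B₂, ht₂, hB₂, rfl⟩ _
    exact ⟨t₁ ∩ t₂, B₁ ∩ B₂, ht₁.inter ht₂, hB₁.inter hB₂, by
      rw [Set.preimage_inter]; ext ω; simp only [Set.mem_inter_iff]; tauto⟩
  have hgen : MeasurableSpace.comap XtS inferInstance ⊔ m' = MeasurableSpace.generateFrom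
      {s : Set Ω | ∃ t B, MeasurableSet t ∧ MeasurableSet[m'] B ∧ s = XtS ⁻¹' t ∩ B} := by
    refine le_antisymm (sup_le ?_ ?_) (MeasurableSpace.generateFrom_le ?_)
    · rintro s ⟨t, ht, rfl⟩
      exact MeasurableSpace.measurableSet_generateFrom
        ⟨t, Set.univ, ht, MeasurableSet.univ, by simp⟩
    · intro B hB
      exact MeasurableSpace.measurableSet_generateFrom
        ⟨Set.univ, B, MeasurableSet.univ, hB, by simp⟩
    · rintro s ⟨t, B, ht, hB, rfl⟩
      exact MeasurableSet.inter
        ((le_sup_left : MeasurableSpace.comap XtS inferInstance ≤ _) _ ⟨t, ht, rfl⟩)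
        ((le_sup_right : m' ≤ _) _ hB)
  have hall : ∀ s : Set Ω, MeasurableSet[MeasurableSpace.comap XtS inferInstance ⊔ m'] s →
      ∫ ω in s, Y ω ∂P = ∫ ω in s, (P[Y|m']) ω ∂P := by
    intro s hs
    refine MeasurableSpace.induction_on_inter
      (C := fun s _ => ∫ ω in s, Y ω ∂P = ∫ ω in s, (P[Y|m']) ω ∂P)
      (s := {s : Set Ω | ∃ t B, MeasurableSet t ∧ MeasurableSet[m'] B ∧ s = XtS ⁻¹' t ∩ B})
      (m := MeasurableSpace.comap XtS inferInstance ⊔ m')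
      hgen hπ_pi ?_ ?_ ?_ ?_ s hs
    · simp
    · rintro s ⟨t, B, ht, hB, rfl⟩
      exact key t ht B hB
    · intro u hu hInd
      have hu0 : MeasurableSet u := hm'' _ hu
      have h1 := integral_add_compl hu0 hYi
      have h2 := integral_add_compl hu0 (integrable_condExp (f := Y) (m := m') (μ := P))
      have h3 : ∫ ω, (P[Y|m']) ω ∂P = ∫ ω, Y ω ∂P := integral_condExp hm'
      linarith
    · intro g hg_disj hg_meas hg_eq
      have hg0 : ∀ i, MeasurableSet (g i) := fun i => hm'' _ (hg_meas i)
      rw [integral_iUnion hg0 hg_disj hYi.integrableOn,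
        integral_iUnion hg0 hg_disj integrable_condExp.integrableOn]
      exact tsum_congr hg_eq
  -- conclude via uniqueness of conditional expectation
  exact (ae_eq_condExp_of_forall_setIntegral_eq hm'' hYi
    (fun s _ _ => integrable_condExp.integrableOn)
    (fun s hs _ => (hall s hs).symm)
    (StronglyMeasurable.aestronglyMeasurable
      (stronglyMeasurable_condExp.mono le_sup_right))).symm

end AuxSup

section MainAux

variable {Ω : Type*} {m0 : MeasurableSpace Ω} {P : Measure Ω} [IsProbabilityMeasure P]

/-- Expansion of the squared loss. -/
lemma aux_expand_sq {Y Z : Ω → ℝ} (hY : MemLp Y 2 P) (hZ : MemLp Z 2 P) :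
    ∫ ω, (Y ω - Z ω) ^ 2 ∂P
      = ∫ ω, (Y ω) ^ 2 ∂P - 2 * ∫ ω, Y ω * Z ω ∂P + ∫ ω, (Z ω) ^ 2 ∂P := by
  have hY2 := hY.integrable_sq
  have hZ2 := hZ.integrable_sq
  have hYZ := aux_integrable_mul hY hZ
  have h : (fun ω => (Y ω - Z ω) ^ 2)
      = fun ω => ((Y ω) ^ 2 - 2 * (Y ω * Z ω)) + (Z ω) ^ 2 := by
    funext ω; ring
  have hI1 : Integrable (fun ω => (Y ω) ^ 2 - 2 * (Y ω * Z ω)) P :=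
    hY2.sub (hYZ.const_mul 2)
  have hI2 : Integrable (fun ω => 2 * (Y ω * Z ω)) P := hYZ.const_mul 2
  rw [h, integral_add hI1 hZ2, integral_sub hY2 hI2, integral_const_mul]

/-- Equality of integrals of squares under equality of laws. -/
lemma aux_integral_map_eq {S C : Type*} [MeasurableSpace S] [MeasurableSpace C]
    {XS XtS : Ω → S} {XC : Ω → C} (hXS : Measurable XS) (hXC : Measurable XC)
    (hXtS : Measurable XtS)
    (hlaw : Measure.map (fun ω => (XtS ω, XC ω)) P = Measure.map (fun ω => (XS ω, XC ω)) P)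
    (g : S × C → ℝ) (hg : Measurable g) :
    ∫ ω, (g (XtS ω, XC ω)) ^ 2 ∂P = ∫ ω, (g (XS ω, XC ω)) ^ 2 ∂P := by
  have h1 : ∫ ω, (g (XtS ω, XC ω)) ^ 2 ∂P
      = ∫ p, (g p) ^ 2 ∂(Measure.map (fun ω => (XtS ω, XC ω)) P) :=
    (integral_map (hXtS.prodMk hXC).aemeasurable
      ((hg.pow_const 2).aestronglyMeasurable)).symm
  have h2 : ∫ ω, (g (XS ω, XC ω)) ^ 2 ∂P
      = ∫ p, (g p) ^ 2 ∂(Measure.map (fun ω => (XS ω, XC ω)) P) :=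
    (integral_map (hXS.prodMk hXC).aemeasurable
      ((hg.pow_const 2).aestronglyMeasurable)).symm
  rw [h1, h2, hlaw]

/-- Conditional expectations given `σ(X_C)` agree for equal laws. -/
lemma aux_condexp_law {S C : Type*} [MeasurableSpace S] [mC : MeasurableSpace C]
    {XS XtS : Ω → S} {XC : Ω → C} (hXS : Measurable XS) (hXC : Measurable XC)
    (hXtS : Measurable XtS)
    (hlaw : Measure.map (fun ω => (XtS ω, XC ω)) P = Measure.map (fun ω => (XS ω, XC ω)) P)
    (g : S × C → ℝ) (hg : Measurable g)
    (hgX : MemLp (fun ω => g (XS ω, XC ω)) 2 P)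
    (hgT : MemLp (fun ω => g (XtS ω, XC ω)) 2 P) :
    P[fun ω => g (XtS ω, XC ω)|MeasurableSpace.comap XC mC]
      =ᵐ[P] P[fun ω => g (XS ω, XC ω)|MeasurableSpace.comap XC mC] := by
  have e : ∀ (W : Ω → S), Measurable W → ∀ (B : Set C), MeasurableSet B →
      ∫ ω in XC ⁻¹' B, g (W ω, XC ω) ∂P
        = ∫ p in Prod.snd ⁻¹' B, g p ∂(Measure.map (fun ω => (W ω, XC ω)) P) := by
    intro W hW B hB
    rw [setIntegral_map (measurable_snd hB) hg.aestronglyMeasurable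
      (hW.prodMk hXC).aemeasurable]
    rfl
  refine (ae_eq_condExp_of_forall_setIntegral_eq hXC.comap_le (hgT.integrable one_le_two)
    (fun s _ _ => integrable_condExp.integrableOn) (fun s hs _ => ?_)
    (StronglyMeasurable.aestronglyMeasurable stronglyMeasurable_condExp)).symm
  obtain ⟨B, hB, rfl⟩ := hs
  rw [setIntegral_condExp hXC.comap_le (hgX.integrable one_le_two) ⟨B, hB, rfl⟩,
    e XS hXS B hB, e XtS hXtS B hB, hlaw]

end MainAux

open MeasureTheory ProbabilityTheory

/-- **Conditional DGP-PFI minus conditional model-PFI (L2 loss).** Let `f̂` be a fixed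
measurable model, `f ∘ X` a version of `E[Y | σ(X_S,X_C)]`, `(X̃_S, X_C)` with the same joint
law as `(X_S, X_C)`, and `Y`, `X̃_S` conditionally independent given `σ(X_C)`. Then, with
`PFI_g = E[(Y − g(X̃_S,X_C))²] − E[(Y − g(X_S,X_C))²]`,
`PFI_f − PFI_f̂ = 2 E[Var_{X_S|X_C}[f] − Cov_{X_S|X_C}[f, f̂]]`, where the conditional
variance and covariance are expressed via conditional expectations given `σ(X_C)`. -/
theorem stmt_12
    {Ω S C : Type*} [MeasurableSpace Ω] [StandardBorelSpace Ω]
    [MeasurableSpace S] [MeasurableSpace C]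
    (P : Measure Ω) [IsProbabilityMeasure P]
    (XS : Ω → S) (XC : Ω → C) (XtS : Ω → S)
    (hXS : Measurable XS) (hXC : Measurable XC) (hXtS : Measurable XtS)
    (Y : Ω → ℝ) (hYmeas : Measurable Y) (hY : MemLp Y 2 P)
    (f : S × C → ℝ) (hf : Measurable f)
    (fhat : S × C → ℝ) (hfhat : Measurable fhat)
    (hfX2 : MemLp (fun ω => f (XS ω, XC ω)) 2 P)
    (hfhatX2 : MemLp (fun ω => fhat (XS ω, XC ω)) 2 P)
    (hfXt2 : MemLp (fun ω => f (XtS ω, XC ω)) 2 P)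
    (hfhatXt2 : MemLp (fun ω => fhat (XtS ω, XC ω)) 2 P)
    (hreg : (fun ω => f (XS ω, XC ω))
      =ᵐ[P] P[Y|MeasurableSpace.comap (fun ω => (XS ω, XC ω)) inferInstance])
    (hlaw : Measure.map (fun ω => (XtS ω, XC ω)) P
      = Measure.map (fun ω => (XS ω, XC ω)) P)
    (hCondIndep : CondIndepFun (MeasurableSpace.comap XC inferInstance)
      hXC.comap_le Y XtS P) :
    ((∫ ω, (Y ω - f (XtS ω, XC ω)) ^ 2 ∂P) - (∫ ω, (Y ω - f (XS ω, XC ω)) ^ 2 ∂P))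
      - ((∫ ω, (Y ω - fhat (XtS ω, XC ω)) ^ 2 ∂P)
          - (∫ ω, (Y ω - fhat (XS ω, XC ω)) ^ 2 ∂P))
      = 2 * ∫ ω,
          (((P[fun ω' => (f (XS ω', XC ω')) ^ 2|MeasurableSpace.comap XC inferInstance]) ω
              - ((P[fun ω' => f (XS ω', XC ω')|MeasurableSpace.comap XC inferInstance]) ω) ^ 2)
            - ((P[fun ω' => f (XS ω', XC ω') * fhat (XS ω', XC ω')|
                  MeasurableSpace.comap XC inferInstance]) ω
              - ((P[fun ω' => f (XS ω', XC ω')|MeasurableSpace.comap XC inferInstance]) ω)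
                * ((P[fun ω' => fhat (XS ω', XC ω')|
                    MeasurableSpace.comap XC inferInstance]) ω))) ∂P := by
  have hYi : Integrable Y P := hY.integrable one_le_two
  have hm' : MeasurableSpace.comap XC inferInstance ≤ ‹MeasurableSpace Ω› := hXC.comap_le
  have hmX : MeasurableSpace.comap (fun ω => (XS ω, XC ω)) inferInstance
      ≤ ‹MeasurableSpace Ω› := (hXS.prodMk hXC).comap_le
  have hm'mX : MeasurableSpace.comap XC inferInstance
      ≤ MeasurableSpace.comap (fun ω => (XS ω, XC ω)) inferInstance := by
    rintro s ⟨B, hB, rfl⟩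
    exact ⟨Prod.snd ⁻¹' B, measurable_snd hB, rfl⟩
  have hm'' : MeasurableSpace.comap XtS inferInstance
      ⊔ MeasurableSpace.comap XC inferInstance ≤ ‹MeasurableSpace Ω› :=
    sup_le hXtS.comap_le hm'
  -- Step C : ∫ Y ⬝ g(X) = ∫ g(X) ⬝ f(X)
  have stepC : ∀ g : S × C → ℝ, Measurable g → MemLp (fun ω => g (XS ω, XC ω)) 2 P →
      ∫ ω, Y ω * g (XS ω, XC ω) ∂P
        = ∫ ω, g (XS ω, XC ω) * f (XS ω, XC ω) ∂P := by
    intro g hg hg2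
    have hsm : StronglyMeasurable[MeasurableSpace.comap (fun ω => (XS ω, XC ω)) inferInstance]
        (fun ω => g (XS ω, XC ω)) :=
      (hg.comp (Measurable.of_comap_le le_rfl)).stronglyMeasurable
    have hint : Integrable ((fun ω => g (XS ω, XC ω)) * Y) P :=
      (aux_integrable_mul hg2 hY).congr (Filter.Eventually.of_forall fun ω => rfl)
    have hpull : P[(fun ω => g (XS ω, XC ω)) * Y|
          MeasurableSpace.comap (fun ω => (XS ω, XC ω)) inferInstance]
        =ᵐ[P] (fun ω => g (XS ω, XC ω))
          * P[Y|MeasurableSpace.comap (fun ω => (XS ω, XC ω)) inferInstance] :=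
      condExp_mul_of_stronglyMeasurable_left hsm hint hYi
    calc ∫ ω, Y ω * g (XS ω, XC ω) ∂P
        = ∫ ω, ((fun ω => g (XS ω, XC ω)) * Y) ω ∂P := by
          simp_rw [Pi.mul_apply, mul_comm]
      _ = ∫ ω, (P[(fun ω => g (XS ω, XC ω)) * Y|
            MeasurableSpace.comap (fun ω => (XS ω, XC ω)) inferInstance]) ω ∂P :=
          (integral_condExp hmX).symm
      _ = ∫ ω, ((fun ω => g (XS ω, XC ω))
            * P[Y|MeasurableSpace.comap (fun ω => (XS ω, XC ω)) inferInstance]) ω ∂P :=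
          integral_congr_ae hpull
      _ = ∫ ω, g (XS ω, XC ω) * f (XS ω, XC ω) ∂P := by
          refine integral_congr_ae ?_
          filter_upwards [hreg] with ω hω
          simp only [Pi.mul_apply]
          rw [← hω]
  -- conditional expectation of Y given σ(X_C) equals that of f(X)
  have hYcond : P[Y|MeasurableSpace.comap XC inferInstance]
      =ᵐ[P] P[fun ω => f (XS ω, XC ω)|MeasurableSpace.comap XC inferInstance] := by
    have h1 : P[fun ω => f (XS ω, XC ω)|MeasurableSpace.comap XC inferInstance]
        =ᵐ[P] P[P[Y|MeasurableSpace.comap (fun ω => (XS ω, XC ω)) inferInstance]|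
          MeasurableSpace.comap XC inferInstance] := condExp_congr_ae hreg
    have h2 : P[P[Y|MeasurableSpace.comap (fun ω => (XS ω, XC ω)) inferInstance]|
          MeasurableSpace.comap XC inferInstance]
        =ᵐ[P] P[Y|MeasurableSpace.comap XC inferInstance] :=
      condExp_condExp_of_le hm'mX hmX
    exact (h1.trans h2).symm
  have hsup := aux_condexp_sup hm' XtS hXtS Y hYmeas hYi hCondIndep
  -- Step D : ∫ Y ⬝ g(X̃) = ∫ E[f(X)|X_C] ⬝ E[g(X)|X_C]
  have stepD : ∀ g : S × C → ℝ, Measurable g →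
      MemLp (fun ω => g (XS ω, XC ω)) 2 P → MemLp (fun ω => g (XtS ω, XC ω)) 2 P →
      ∫ ω, Y ω * g (XtS ω, XC ω) ∂P
        = ∫ ω, (P[fun ω' => f (XS ω', XC ω')|MeasurableSpace.comap XC inferInstance]) ω
            * (P[fun ω' => g (XS ω', XC ω')|MeasurableSpace.comap XC inferInstance]) ω ∂P := by
    intro g hg hgX2 hgT2
    have hsm'' : StronglyMeasurable[MeasurableSpace.comap XtS inferInstance
          ⊔ MeasurableSpace.comap XC inferInstance] (fun ω => g (XtS ω, XC ω)) :=
      (hg.comp ((Measurable.of_comap_le le_sup_left).prodMk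
        (Measurable.of_comap_le le_sup_right))).stronglyMeasurable
    have hgTi : Integrable (fun ω => g (XtS ω, XC ω)) P := hgT2.integrable one_le_two
    have hint1 : Integrable ((fun ω => g (XtS ω, XC ω)) * Y) P :=
      (aux_integrable_mul hgT2 hY).congr (Filter.Eventually.of_forall fun ω => rfl)
    have hpull1 : P[(fun ω => g (XtS ω, XC ω)) * Y|MeasurableSpace.comap XtS inferInstance
          ⊔ MeasurableSpace.comap XC inferInstance]
        =ᵐ[P] (fun ω => g (XtS ω, XC ω)) * P[Y|MeasurableSpace.comap XtS inferInstance
          ⊔ MeasurableSpace.comap XC inferInstance] :=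
      condExp_mul_of_stronglyMeasurable_left hsm'' hint1 hYi
    have hb2 : MemLp (P[fun ω' => f (XS ω', XC ω')|
        MeasurableSpace.comap XC inferInstance]) 2 P := aux_memℒp_condexp hm' hfX2
    have hint2 : Integrable ((P[fun ω' => f (XS ω', XC ω')|
          MeasurableSpace.comap XC inferInstance]) * (fun ω => g (XtS ω, XC ω))) P :=
      (aux_integrable_mul hb2 hgT2).congr (Filter.Eventually.of_forall fun ω => rfl)
    have hpull2 : P[(P[fun ω' => f (XS ω', XC ω')|MeasurableSpace.comap XC inferInstance])
          * (fun ω => g (XtS ω, XC ω))|MeasurableSpace.comap XC inferInstance]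
        =ᵐ[P] (P[fun ω' => f (XS ω', XC ω')|MeasurableSpace.comap XC inferInstance])
          * P[fun ω => g (XtS ω, XC ω)|MeasurableSpace.comap XC inferInstance] :=
      condExp_mul_of_stronglyMeasurable_left stronglyMeasurable_condExp hint2 hgTi
    have hlawg := aux_condexp_law hXS hXC hXtS hlaw g hg hgX2 hgT2
    calc ∫ ω, Y ω * g (XtS ω, XC ω) ∂P
        = ∫ ω, ((fun ω => g (XtS ω, XC ω)) * Y) ω ∂P := by
          simp_rw [Pi.mul_apply, mul_comm]
      _ = ∫ ω, (P[(fun ω => g (XtS ω, XC ω)) * Y|MeasurableSpace.comap XtS inferInstance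
            ⊔ MeasurableSpace.comap XC inferInstance]) ω ∂P := (integral_condExp hm'').symm
      _ = ∫ ω, g (XtS ω, XC ω) * (P[Y|MeasurableSpace.comap XtS inferInstance
            ⊔ MeasurableSpace.comap XC inferInstance]) ω ∂P := integral_congr_ae hpull1
      _ = ∫ ω, ((P[fun ω' => f (XS ω', XC ω')|MeasurableSpace.comap XC inferInstance])
            * (fun ω => g (XtS ω, XC ω))) ω ∂P := by
          refine integral_congr_ae ?_
          filter_upwards [hsup, hYcond] with ω h1 h2
          simp only [Pi.mul_apply]
          rw [h1, h2, mul_comm]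
      _ = ∫ ω, (P[(P[fun ω' => f (XS ω', XC ω')|MeasurableSpace.comap XC inferInstance])
            * (fun ω => g (XtS ω, XC ω))|MeasurableSpace.comap XC inferInstance]) ω ∂P :=
          (integral_condExp hm').symm
      _ = ∫ ω, ((P[fun ω' => f (XS ω', XC ω')|MeasurableSpace.comap XC inferInstance])
            * P[fun ω => g (XtS ω, XC ω)|MeasurableSpace.comap XC inferInstance]) ω ∂P :=
          integral_congr_ae hpull2
      _ = ∫ ω, (P[fun ω' => f (XS ω', XC ω')|MeasurableSpace.comap XC inferInstance]) ω
            * (P[fun ω' => g (XS ω', XC ω')|MeasurableSpace.comap XC inferInstance]) ω ∂P := by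
          refine integral_congr_ae ?_
          filter_upwards [hlawg] with ω hω
          simp only [Pi.mul_apply]
          rw [hω]
  -- expansions
  have e1 := aux_expand_sq hY hfXt2
  have e2 := aux_expand_sq hY hfX2
  have e3 := aux_expand_sq hY hfhatXt2
  have e4 := aux_expand_sq hY hfhatX2
  have m1 := aux_integral_map_eq hXS hXC hXtS hlaw f hf
  have m2 := aux_integral_map_eq hXS hXC hXtS hlaw fhat hfhat
  have c1 := stepC f hf hfX2
  have c2 := stepC fhat hfhat hfhatX2
  have d1 := stepD f hf hfX2 hfXt2
  have d2 := stepD fhat hfhat hfhatX2 hfhatXt2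
  -- RHS computation
  have hb2 : MemLp (P[fun ω' => f (XS ω', XC ω')|
      MeasurableSpace.comap XC inferInstance]) 2 P := aux_memℒp_condexp hm' hfX2
  have hd2 : MemLp (P[fun ω' => fhat (XS ω', XC ω')|
      MeasurableSpace.comap XC inferInstance]) 2 P := aux_memℒp_condexp hm' hfhatX2
  have ia : Integrable (P[fun ω' => (f (XS ω', XC ω')) ^ 2|
      MeasurableSpace.comap XC inferInstance]) P := integrable_condExp
  have ib2 : Integrable (fun ω =>
      ((P[fun ω' => f (XS ω', XC ω')|MeasurableSpace.comap XC inferInstance]) ω) ^ 2) P :=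
    hb2.integrable_sq
  have ic : Integrable (P[fun ω' => f (XS ω', XC ω') * fhat (XS ω', XC ω')|
      MeasurableSpace.comap XC inferInstance]) P := integrable_condExp
  have ibd : Integrable (fun ω =>
      (P[fun ω' => f (XS ω', XC ω')|MeasurableSpace.comap XC inferInstance]) ω
        * (P[fun ω' => fhat (XS ω', XC ω')|MeasurableSpace.comap XC inferInstance]) ω) P :=
    aux_integrable_mul hb2 hd2
  have hRHS : ∫ ω,
        (((P[fun ω' => (f (XS ω', XC ω')) ^ 2|MeasurableSpace.comap XC inferInstance]) ω
            - ((P[fun ω' => f (XS ω', XC ω')|MeasurableSpace.comap XC inferInstance]) ω) ^ 2)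
          - ((P[fun ω' => f (XS ω', XC ω') * fhat (XS ω', XC ω')|
                MeasurableSpace.comap XC inferInstance]) ω
            - ((P[fun ω' => f (XS ω', XC ω')|MeasurableSpace.comap XC inferInstance]) ω)
              * ((P[fun ω' => fhat (XS ω', XC ω')|
                  MeasurableSpace.comap XC inferInstance]) ω))) ∂P
      = (∫ ω, (f (XS ω, XC ω)) ^ 2 ∂P
          - ∫ ω, ((P[fun ω' => f (XS ω', XC ω')|
              MeasurableSpace.comap XC inferInstance]) ω) ^ 2 ∂P)
        - (∫ ω, f (XS ω, XC ω) * fhat (XS ω, XC ω) ∂P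
          - ∫ ω, (P[fun ω' => f (XS ω', XC ω')|MeasurableSpace.comap XC inferInstance]) ω
              * (P[fun ω' => fhat (XS ω', XC ω')|
                  MeasurableSpace.comap XC inferInstance]) ω ∂P) := by
    have iA : Integrable (fun ω =>
        (P[fun ω' => (f (XS ω', XC ω')) ^ 2|MeasurableSpace.comap XC inferInstance]) ω
          - ((P[fun ω' => f (XS ω', XC ω')|MeasurableSpace.comap XC inferInstance]) ω) ^ 2) P :=
      ia.sub ib2
    have iC : Integrable (fun ω =>
        (P[fun ω' => f (XS ω', XC ω') * fhat (XS ω', XC ω')|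
            MeasurableSpace.comap XC inferInstance]) ω
          - (P[fun ω' => f (XS ω', XC ω')|MeasurableSpace.comap XC inferInstance]) ω
            * (P[fun ω' => fhat (XS ω', XC ω')|MeasurableSpace.comap XC inferInstance]) ω) P :=
      ic.sub ibd
    rw [integral_sub iA iC, integral_sub ia ib2, integral_sub ic ibd,
      integral_condExp hm', integral_condExp hm']
  -- conversions between squares and products
  have sq1 : ∫ ω, f (XS ω, XC ω) * f (XS ω, XC ω) ∂P = ∫ ω, (f (XS ω, XC ω)) ^ 2 ∂P :=
    integral_congr_ae (Filter.Eventually.of_forall fun ω => by ring)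
  have sq2 : ∫ ω, (P[fun ω' => f (XS ω', XC ω')|MeasurableSpace.comap XC inferInstance]) ω
        * (P[fun ω' => f (XS ω', XC ω')|MeasurableSpace.comap XC inferInstance]) ω ∂P
      = ∫ ω, ((P[fun ω' => f (XS ω', XC ω')|
          MeasurableSpace.comap XC inferInstance]) ω) ^ 2 ∂P :=
    integral_congr_ae (Filter.Eventually.of_forall fun ω => by ring)
  have co1 : ∫ ω, fhat (XS ω, XC ω) * f (XS ω, XC ω) ∂P
      = ∫ ω, f (XS ω, XC ω) * fhat (XS ω, XC ω) ∂P :=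
    integral_congr_ae (Filter.Eventually.of_forall fun ω => by ring)
  rw [e1, e2, e3, e4, m1, m2, c1, c2, d1, d2, hRHS, sq1, sq2, co1]
  ring
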